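/- If a chord c in a chord diagram crosses no other chord, then the two sides of c lie in two distinct cycles of the diagram; consequently, a chord diagram with exactly one cycle (a 0-filling system) has no chord crossing no other chord unless it is the unique 1-chord diagram. -/

import Mathlib

/-- The next point clockwise on the cyclically ordered set of `N` points. -/
def cnext {N : ℕ} (x : Fin N) : Fin N := ⟨(x.val + 1) % N, Nat.mod_lt _ x.pos⟩

/-- Clockwise distance from `x` to `y` among `N` cyclically ordered points. -/
def cdist {N : ℕ} (x y : Fin N) : ℕ := (y.val + N - x.val) % N

/-- `z` lies strictly between `x` and `y` in clockwise cyclic order. -/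
def CBetween {N : ℕ} (x z y : Fin N) : Prop := 0 < cdist x z ∧ cdist x z < cdist x y

/-- A chord diagram with `n` chords is a fixed-point-free involution (perfect
matching) `m` on the `2n` cyclically ordered points `Fin (2n)`.  The chord at
`a` has endpoints `a` and `m a`.  Two chords cross iff their endpoints
interleave in the cyclic order: exactly one endpoint of the chord at `b` lies
strictly inside the arc from `a` to `m a`. -/
def Crosses {N : ℕ} (m : Fin N → Fin N) (a b : Fin N) : Prop :=
  Xor' (CBetween a b (m a)) (CBetween a (m b) (m a))

/-- The boundary traversal permutation of the one-vertex fat graph associated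
to the chord diagram `m`: follow the chord from `x` to `m x`, then the outer
edge to the next point `m x + 1`. -/
def bperm {N : ℕ} (m : Fin N → Fin N) : Fin N → Fin N := fun x => cnext (m x)

/-- The number of cycles of the chord diagram `m`, i.e. the number of boundary
components of the associated one-vertex fat graph: the number of orbits of the
boundary traversal permutation, counted by their minimal elements (every orbit
of a permutation of `Fin N` is exhausted by the first `N` iterates). -/
def numCycles {N : ℕ} (m : Fin N → Fin N) : ℕ :=
  (Finset.univ.filter fun i : Fin N =>
    ∀ k ∈ Finset.range N, ¬ ((bperm m)^[k] i < i)).card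

/-!
STATEMENT 12: If a chord c in a chord diagram crosses no other chord, then the
two sides of c lie in two distinct cycles of the diagram; consequently, a
chord diagram with exactly one cycle (a 0-filling system) has no chord crossing
no other chord unless it is the unique 1-chord diagram.

Formalization: diagrams are fixed-point-free involutions `m` of `Fin (2n+2)`.
The two sides of the chord at `a` lie in the cycles (orbits of the boundary
traversal permutation `bperm m`) of `a` and of `m a` respectively; "distinct
cycles" means `m a` is not in the orbit of `a`.  "Exactly one cycle" means the
boundary traversal is transitive; the unique 1-chord diagram (n = 0) has two
cycles, so transitivity already excludes it and every chord of a one-cycle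
diagram crosses some other chord.
-/
lemma cdist_eq {N : ℕ} (x y : Fin N) :
    cdist x y = if x.val ≤ y.val then y.val - x.val else y.val + N - x.val := by
  have hx := x.isLt; have hy := y.isLt
  unfold cdist
  split
  · next h =>
      have h2 : y.val + N - x.val = (y.val - x.val) + N := by omega
      rw [h2, Nat.add_mod_right, Nat.mod_eq_of_lt (by omega)]
  · next h =>
      rw [Nat.mod_eq_of_lt (by omega)]

lemma cnext_val {N : ℕ} (x : Fin N) :
    (cnext x).val = if x.val + 1 = N then 0 else x.val + 1 := by
  have hx := x.isLt
  show (x.val + 1) % N = _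
  split
  · next h => rw [h, Nat.mod_self]
  · next h => exact Nat.mod_eq_of_lt (by omega)

lemma step_lemma {N : ℕ} (m : Fin N → Fin N) (hinv : Function.Involutive m)
    (hfix : ∀ i, m i ≠ i) (a : Fin N) (hnc : ∀ b, ¬ Crosses m a b)
    (x : Fin N) (hx1 : 0 < cdist (m a) x) (hx2 : cdist (m a) x ≤ cdist (m a) a) :
    0 < cdist (m a) (bperm m x) ∧ cdist (m a) (bperm m x) ≤ cdist (m a) a := by
  have hN : 0 < N := a.pos
  have hma : (m a).val ≠ a.val := fun h => hfix a (Fin.ext h)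
  have hva := a.isLt; have hvw := (m a).isLt; have hvx := x.isLt
  rcases eq_or_lt_of_le hx2 with heq | hlt
  · -- then x = a
    have hxa : x = a := by
      apply Fin.ext
      simp only [cdist_eq] at heq
      split_ifs at heq <;> omega
    rw [hxa]
    show 0 < cdist (m a) (cnext (m a)) ∧ cdist (m a) (cnext (m a)) ≤ cdist (m a) a
    simp only [cdist_eq, cnext_val]
    split_ifs <;> omega
  · -- x strictly between m a and a
    have hxa' : x.val ≠ a.val := by
      simp only [cdist_eq] at hlt; split_ifs at hlt <;> omega
    have hxma' : x.val ≠ (m a).val := by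
      simp only [cdist_eq] at hx1; split_ifs at hx1 <;> omega
    have hxa : x ≠ a := fun h => hxa' (by rw [h])
    have hxma : x ≠ m a := fun h => hxma' (by rw [h])
    -- x not in arc from a to m a
    have hnb1 : ¬ CBetween a x (m a) := by
      intro hc
      obtain ⟨h1, h2⟩ := hc
      simp only [cdist_eq] at h1 h2 hx1 hlt
      split_ifs at h1 h2 hx1 hlt <;> omega
    have hnb2 : ¬ CBetween a (m x) (m a) := by
      have := hnc x
      unfold Crosses Xor' at this; simp only [xor_iff_not_iff] at this
      tauto
    have hmxa : m x ≠ a := fun h => hxma (by rw [← h]; exact (hinv x).symm)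
    have hmxma : m x ≠ m a := fun h => hxa (by rw [← hinv x, h, hinv])
    have hvmx := (m x).isLt
    have hmxa' : (m x).val ≠ a.val := fun h => hmxa (Fin.ext h)
    have hmxma' : (m x).val ≠ (m a).val := fun h => hmxma (Fin.ext h)
    -- hence m x strictly between m a and a
    have hkey : 0 < cdist (m a) (m x) ∧ cdist (m a) (m x) < cdist (m a) a := by
      rw [CBetween] at hnb2
      push_neg at hnb2
      simp only [cdist_eq] at hnb2 ⊢
      split_ifs at hnb2 ⊢ <;> omega
    show 0 < cdist (m a) (cnext (m x)) ∧ cdist (m a) (cnext (m x)) ≤ cdist (m a) a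
    obtain ⟨hk1, hk2⟩ := hkey
    simp only [cdist_eq, cnext_val] at hk1 hk2 ⊢
    split_ifs at hk1 hk2 ⊢ <;> omega

lemma orbit_invariant {N : ℕ} (m : Fin N → Fin N) (hinv : Function.Involutive m)
    (hfix : ∀ i, m i ≠ i) (a : Fin N) (hnc : ∀ b, ¬ Crosses m a b) (k : ℕ) :
    0 < cdist (m a) ((bperm m)^[k] a) ∧ cdist (m a) ((bperm m)^[k] a) ≤ cdist (m a) a := by
  induction k with
  | zero =>
    simp only [Function.iterate_zero, id_eq]
    have hma : (m a).val ≠ a.val := fun h => hfix a (Fin.ext h)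
    have hva := a.isLt; have hvw := (m a).isLt
    simp only [cdist_eq]
    constructor
    · split_ifs <;> omega
    · split_ifs <;> omega
  | succ k ih =>
    rw [Function.iterate_succ_apply']
    exact step_lemma m hinv hfix a hnc _ ih.1 ih.2

theorem noncrossing_chord_separates_cycles {n : ℕ}
    (m : Fin (2 * n + 2) → Fin (2 * n + 2))
    (hinv : Function.Involutive m) (hfix : ∀ i, m i ≠ i) :
    (∀ a : Fin (2 * n + 2), (∀ b, ¬ Crosses m a b) →
      ¬ ∃ k : ℕ, (bperm m)^[k] a = m a) ∧
    ((∀ i j : Fin (2 * n + 2), ∃ k : ℕ, (bperm m)^[k] i = j) →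
      ∀ a : Fin (2 * n + 2), ∃ b, Crosses m a b) := by
  have part1 : ∀ a : Fin (2 * n + 2), (∀ b, ¬ Crosses m a b) →
      ¬ ∃ k : ℕ, (bperm m)^[k] a = m a := by
    intro a hnc ⟨k, hk⟩
    have h := (orbit_invariant m hinv hfix a hnc k).1
    rw [hk] at h
    have : cdist (m a) (m a) = 0 := by
      simp only [cdist_eq]
      split_ifs <;> omega
    omega
  refine ⟨part1, fun htrans a => ?_⟩
  by_contra h
  push_neg at h
  exact part1 a (fun b => h b) (htrans a (m a))
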